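/- Fix uniform bids b_{ij} = α_i v_{ij} with multipliers α_i ≥ 1 and an allocation a valid under b, and let a^opt be the optimal allocation obtained by ranking all items in descending order of true value v_{ij}, breaking ties in favor of the item appearing earlier in a. Then for every k ∈ [K], the sum of the GSP per-click prices of the top k slots covers the value of the displaced optimal items: Σ_{t=1}^{k} τ_{a(t)}(a, b) ≥ Σ_{(i,j) ∈ S_k(a^opt) \ S_k(a)} v_{ij}. -/

import Mathlib

open Finset MeasureTheory

namespace SponsoredShopping

noncomputable section

/-- An item is a pair `(i, j)`: bidder `i`'s `j`-th item. -/
abbrev Item (n m : ℕ) : Type := Fin n × Fin m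

/-- An allocation assigns to each rank `k` (0-based) an item. -/
abbrev Alloc (n m : ℕ) : Type := Fin (n * m) ≃ Item n m

/-- Maximum of `f` over a finite set, with value `0` on the empty set. -/
def fmax {ι : Type*} (s : Finset ι) (f : ι → ℝ) : ℝ :=
  WithBot.unbotD 0 (s.sup fun i => (f i : WithBot ℝ))

variable {n m : ℕ}

/-- An allocation is valid under bids `b` if bids are nonincreasing along ranks. -/
def ValidUnder (b : Item n m → ℝ) (a : Alloc n m) : Prop :=
  ∀ k k' : Fin (n * m), k ≤ k' → b (a k') ≤ b (a k)

/-- The value of bidder `i` under allocation `a`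
(`c k` is the CTR of slot `k`, with `c k = 0` for `k ≥ K`). -/
def bidderValue (c : ℕ → ℝ) (v : Item n m → ℝ) (a : Alloc n m) (i : Fin n) : ℝ :=
  ∑ k : Fin (n * m), if (a k).1 = i then c k * v (a k) else 0

/-- Social welfare of an allocation. -/
def wel (c : ℕ → ℝ) (v : Item n m → ℝ) (a : Alloc n m) : ℝ :=
  ∑ k : Fin (n * m), c k * v (a k)

/-- Optimal social welfare. -/
def welOpt (c : ℕ → ℝ) (v : Item n m → ℝ) : ℝ :=
  fmax (univ : Finset (Alloc n m)) (wel c v)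

/-- GSP per-click price of the item ranked `k`: highest bid among lower-ranked
items belonging to other bidders (`0` if none). -/
def gspPrice (b : Item n m → ℝ) (a : Alloc n m) (k : Fin (n * m)) : ℝ :=
  fmax (univ.filter fun k' : Fin (n * m) => k < k' ∧ (a k').1 ≠ (a k).1)
    (fun k' => b (a k'))

/-- Total GSP payment of bidder `i`. -/
def gspPay (c : ℕ → ℝ) (b : Item n m → ℝ) (a : Alloc n m) (i : Fin n) : ℝ :=
  ∑ k : Fin (n * m), if (a k).1 = i then c k * gspPrice b a k else 0

/-- Bid-welfare of an allocation. -/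
def bidWelfare (c : ℕ → ℝ) (b : Item n m → ℝ) (a : Alloc n m) : ℝ :=
  ∑ k : Fin (n * m), c k * b (a k)

/-- Bids with bidder `i`'s bids zeroed out. -/
def exclBids (b : Item n m → ℝ) (i : Fin n) : Item n m → ℝ :=
  fun x => if x.1 = i then 0 else b x

/-- Bid-welfare obtained by bidders other than `i` in allocation `a`. -/
def othersWelfare (c : ℕ → ℝ) (b : Item n m → ℝ) (a : Alloc n m) (i : Fin n) : ℝ :=
  ∑ k : Fin (n * m), if (a k).1 ≠ i then c k * b (a k) else 0

/-- Optimal counterfactual bid-welfare without bidder `i`. -/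
def woptWithout (c : ℕ → ℝ) (b : Item n m → ℝ) (i : Fin n) : ℝ :=
  fmax (univ : Finset (Alloc n m)) (fun a' => bidWelfare c (exclBids b i) a')

/-- VCG payment of bidder `i`. -/
def vcgPay (c : ℕ → ℝ) (b : Item n m → ℝ) (a : Alloc n m) (i : Fin n) : ℝ :=
  woptWithout c b i - othersWelfare c b a i

/-- The two mechanisms considered. -/
inductive Mech | gsp | vcg

/-- Payment of bidder `i` under mechanism `M`. -/
def pay : Mech → (ℕ → ℝ) → (Item n m → ℝ) → Alloc n m → Fin n → ℝ
  | .gsp => gspPay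
  | .vcg => vcgPay

/-- `S_k(a)`: the set of items assigned to the first `k` slots in `a`. -/
def topk (a : Alloc n m) (k : ℕ) : Finset (Item n m) :=
  (univ.filter fun r : Fin (n * m) => (r : ℕ) < k).image a

lemma le_fmax {ι : Type*} {s : Finset ι} (f : ι → ℝ) {i : ι} (hi : i ∈ s) :
    f i ≤ fmax s f := by
  have h := Finset.le_sup (f := fun i => (f i : WithBot ℝ)) hi
  unfold fmax
  cases hs : s.sup (fun i => (f i : WithBot ℝ)) with
  | bot => rw [hs] at h; exact absurd h (by simp)
  | coe z => rw [hs] at h; rw [WithBot.unbotD_coe]; exact WithBot.coe_le_coe.mp h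

lemma fmax_nonneg {ι : Type*} {s : Finset ι} (f : ι → ℝ) (h : ∀ i ∈ s, 0 ≤ f i) :
    0 ≤ fmax s f := by
  unfold fmax
  cases hs : s.sup (fun i => (f i : WithBot ℝ)) with
  | bot => simp
  | coe z =>
    have hne : s.Nonempty := by
      rcases s.eq_empty_or_nonempty with rfl | hne
      · simp at hs
      · exact hne
    obtain ⟨i, hi, hieq⟩ := Finset.exists_mem_eq_sup' hne f
    have : s.sup (fun i => (f i : WithBot ℝ)) = ((s.sup' hne f : ℝ) : WithBot ℝ) :=
      (Finset.coe_sup' hne f).symm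
    rw [hs] at this
    have hz : z = f i := by rw [← hieq]; exact_mod_cast this
    simpa [hz] using h i hi

lemma mem_topk {a : Alloc n m} {k : ℕ} {x : Item n m} :
    x ∈ topk a k ↔ ((a.symm x : ℕ) < k) := by
  simp only [topk, Finset.mem_image, Finset.mem_filter, Finset.mem_univ, true_and]
  constructor
  · rintro ⟨r, hr, rfl⟩; simpa using hr
  · intro h; exact ⟨a.symm x, h, a.apply_symm_apply x⟩

/-- The cumulative GSP per-click prices of the top `k` slots cover the value of
the displaced optimal items. -/
theorem gsp_prefix_prices_cover_displaced_value
    (n m K : ℕ) (v : Item n m → ℝ)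
    (hv : ∀ x : Item n m, 0 ≤ v x)
    (hvmono : ∀ (i : Fin n) (j j' : Fin m), j ≤ j' → v (i, j') ≤ v (i, j))
    (α : Fin n → ℝ) (hα : ∀ i, 1 ≤ α i)
    (a : Alloc n m) (ha : ValidUnder (fun x => α x.1 * v x) a)
    (aopt : Alloc n m)
    (hsort : ∀ r r' : Fin (n * m), r ≤ r' → v (aopt r') ≤ v (aopt r))
    (htie : ∀ x y : Item n m, v x = v y →
      (aopt.symm x ≤ aopt.symm y ↔ a.symm x ≤ a.symm y)) :
    ∀ k : ℕ, k ≤ K →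
      ∑ x ∈ topk aopt k \ topk a k, v x
        ≤ ∑ t : Fin (n * m),
            if (t : ℕ) < k then gspPrice (fun x => α x.1 * v x) a t else 0 := by
  intro k _hK
  set b : Item n m → ℝ := fun x => α x.1 * v x with hbdef
  have hbv : ∀ x, v x ≤ b x := fun x => by
    simpa [hbdef] using le_mul_of_one_le_left (hv x) (hα x.1)
  have hbnn : ∀ x, 0 ≤ b x := fun x => (hv x).trans (hbv x)
  set D : Finset (Item n m) := topk aopt k \ topk a k with hD
  set T : Finset (Fin (n * m)) :=
    univ.filter (fun t => (t : ℕ) < k ∧ a t ∉ topk aopt k) with hT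
  -- key pointwise bound
  have hkey : ∀ x ∈ D, ∀ t ∈ T, v x ≤ gspPrice b a t := by
    intro x hx t ht
    rw [hD, Finset.mem_sdiff] at hx
    obtain ⟨hx1, hx2⟩ := hx
    rw [hT, Finset.mem_filter] at ht
    obtain ⟨-, htk, hto⟩ := ht
    set r := a.symm x with hr
    have har : a r = x := a.apply_symm_apply x
    have hrk : k ≤ (r : ℕ) := by
      rw [mem_topk] at hx2; omega
    have htr : t < r := by
      rw [Fin.lt_def]; omega
    have hne : (a t).1 ≠ x.1 := by
      intro hEq
      have h1 : b x ≤ b (a t) := by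
        have := ha t r htr.le; rwa [har] at this
      have hαpos : 0 < α (a t).1 := lt_of_lt_of_le one_pos (hα _)
      have hvle : v x ≤ v (a t) := by
        rw [hbdef] at h1
        simp only at h1
        rw [← hEq] at h1
        exact le_of_mul_le_mul_left h1 hαpos
      have hopt : aopt.symm x ≤ aopt.symm (a t) := by
        rw [mem_topk] at hx1 hto
        rw [Fin.le_def]; omega
      have h2 : v (a t) ≤ v x := by
        have := hsort (aopt.symm x) (aopt.symm (a t)) hopt
        simpa using this
      have heqv : v x = v (a t) := le_antisymm hvle h2
      have h3 : a.symm x ≤ a.symm (a t) := (htie x (a t) heqv).mp hopt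
      rw [a.symm_apply_apply] at h3
      exact absurd (lt_of_lt_of_le htr h3) (lt_irrefl t)
    have hrmem : r ∈ univ.filter (fun k' : Fin (n * m) => t < k' ∧ (a k').1 ≠ (a t).1) := by
      simp only [Finset.mem_filter, Finset.mem_univ, true_and]
      exact ⟨htr, by rw [har]; exact fun h => hne h.symm⟩
    calc v x ≤ b x := hbv x
      _ = b (a r) := by rw [har]
      _ ≤ gspPrice b a t := by unfold gspPrice; exact le_fmax (fun k' => b (a k')) hrmem
  -- cardinalities
  have hinj : ∀ (e : Alloc n m), Function.Injective e := fun e => e.injective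
  have hcards : (topk aopt k).card = (topk a k).card := by
    rw [topk, topk, Finset.card_image_of_injective _ (hinj aopt),
      Finset.card_image_of_injective _ (hinj a)]
  have himg : topk a k \ topk aopt k = T.image a := by
    ext x
    simp only [Finset.mem_sdiff, Finset.mem_image, hT, Finset.mem_filter,
      Finset.mem_univ, true_and]
    constructor
    · rintro ⟨hx1, hx2⟩
      rw [mem_topk] at hx1
      exact ⟨a.symm x, ⟨hx1, by rwa [a.apply_symm_apply]⟩, a.apply_symm_apply x⟩
    · rintro ⟨t, ⟨htk, hto⟩, rfl⟩
      exact ⟨mem_topk.mpr (by simpa using htk), hto⟩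
  have hcard : D.card = T.card := by
    rw [hD, Finset.card_sdiff_comm hcards, himg,
      Finset.card_image_of_injective _ (hinj a)]
  -- sum comparison via a bijection
  have e := Finset.equivOfCardEq hcard
  have hsum1 : ∑ x ∈ D, v x ≤ ∑ t ∈ T, gspPrice b a t := by
    calc ∑ x ∈ D, v x = ∑ x : D, v x.1 := (Finset.sum_coe_sort D v).symm
      _ ≤ ∑ x : D, gspPrice b a (e x).1 :=
          Finset.sum_le_sum fun x _ => hkey x.1 x.2 (e x).1 (e x).2
      _ = ∑ t : T, gspPrice b a t.1 :=
          Equiv.sum_comp e (fun t : T => gspPrice b a t.1)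
      _ = ∑ t ∈ T, gspPrice b a t := Finset.sum_coe_sort T _
  have hsub : T ⊆ univ.filter (fun t : Fin (n * m) => (t : ℕ) < k) := by
    intro t ht
    rw [hT, Finset.mem_filter] at ht
    exact Finset.mem_filter.mpr ⟨Finset.mem_univ t, ht.2.1⟩
  have hsum2 : ∑ t ∈ T, gspPrice b a t
      ≤ ∑ t ∈ univ.filter (fun t : Fin (n * m) => (t : ℕ) < k), gspPrice b a t :=
    Finset.sum_le_sum_of_subset_of_nonneg hsub
      (fun t _ _ => fmax_nonneg _ (fun i _ => hbnn _))
  calc ∑ x ∈ D, v x ≤ ∑ t ∈ T, gspPrice b a t := hsum1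
    _ ≤ ∑ t ∈ univ.filter (fun t : Fin (n * m) => (t : ℕ) < k), gspPrice b a t := hsum2
    _ = ∑ t : Fin (n * m), if (t : ℕ) < k then gspPrice b a t else 0 :=
        (Finset.sum_filter _ _)

end
end SponsoredShopping
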